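/- Let ψ be a positive, trace-preserving ℂ-linear map on M_d(ℂ), and let X ∈ M_d(ℂ) be a Hermitian fixed point of ψ: X† = X and ψ(X) = X. Write X = A − B where A, B ∈ M_d(ℂ) are positive semidefinite with A·B = 0 (the decomposition of X into its positive and negative spectral parts). Then ψ(A) = A and ψ(B) = B; in particular ψ(A + B) = A + B, i.e. |X| is also a fixed point of ψ. -/

import Mathlib

open Matrix Kronecker
open scoped ComplexOrder

/-- A bipartite matrix on `ℂ^{d₁} ⊗ ℂ^{d₂}` is separable if it is a finite sum of
Kronecker products of positive semidefinite matrices. -/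
def MatSep {d₁ d₂ : ℕ} (ρ : Matrix (Fin d₁ × Fin d₂) (Fin d₁ × Fin d₂) ℂ) : Prop :=
  ∃ (k : ℕ) (A : Fin k → Matrix (Fin d₁) (Fin d₁) ℂ) (B : Fin k → Matrix (Fin d₂) (Fin d₂) ℂ),
    (∀ i, (A i).PosSemidef) ∧ (∀ i, (B i).PosSemidef) ∧ ρ = ∑ i, A i ⊗ₖ B i

/-- The positive and negative parts of a Hermitian fixed point of a positive
trace-preserving map are themselves fixed points; in particular so is . -/
lemma psd_trace_nonneg' {d : ℕ} {M : Matrix (Fin d) (Fin d) ℂ} (hM : M.PosSemidef) :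
    0 ≤ M.trace := by
  rw [Matrix.trace]
  refine Finset.sum_nonneg fun i _ => ?_
  simpa [Matrix.mulVec_single, dotProduct, Pi.single_apply] using hM.dotProduct_mulVec_nonneg (Pi.single i 1)

lemma psd_trace_zero' {d : ℕ} {M : Matrix (Fin d) (Fin d) ℂ} (hM : M.PosSemidef)
    (h : M.trace = 0) : M = 0 := by
  obtain ⟨N, rfl⟩ := (by open scoped MatrixOrder in exact CStarAlgebra.nonneg_iff_eq_star_mul_self.mp hM.nonneg : ∃ N : Matrix (Fin d) (Fin d) ℂ, M = Nᴴ * N)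
  suffices hN : N = 0 by simp [hN]
  have h' : ∑ i, ∑ j, star (N j i) * N j i = 0 := by
    simpa [Matrix.trace, Matrix.diag, Matrix.mul_apply, Matrix.conjTranspose_apply] using h
  have hterm : ∀ i ∈ Finset.univ, (0:ℂ) ≤ ∑ j, star (N j i) * N j i := fun i _ =>
    Finset.sum_nonneg fun j _ => star_mul_self_nonneg _
  ext j i
  have h1 := (Finset.sum_eq_zero_iff_of_nonneg hterm).mp h' i (Finset.mem_univ i)
  have h2 := (Finset.sum_eq_zero_iff_of_nonneg
    (fun j _ => star_mul_self_nonneg (N j i))).mp h1 j (Finset.mem_univ j)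
  rcases mul_eq_zero.mp h2 with h3 | h3
  · simpa using star_eq_zero.mp h3
  · simpa using h3

lemma psd_conj_zero' {d : ℕ} {M Q : Matrix (Fin d) (Fin d) ℂ} (hM : M.PosSemidef)
    (hQ : Qᴴ = Q) (h : Q * M * Q = 0) : M * Q = 0 := by
  obtain ⟨N, rfl⟩ := (by open scoped MatrixOrder in exact CStarAlgebra.nonneg_iff_eq_star_mul_self.mp hM.nonneg : ∃ N : Matrix (Fin d) (Fin d) ℂ, M = Nᴴ * N)
  have h1 : (N * Q)ᴴ * (N * Q) = 0 := by
    rw [Matrix.conjTranspose_mul, hQ]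
    calc Q * Nᴴ * (N * Q) = Q * (Nᴴ * N) * Q := by noncomm_ring
      _ = 0 := h
  have hNQ : N * Q = 0 := Matrix.conjTranspose_mul_self_eq_zero.mp h1
  calc Nᴴ * N * Q = Nᴴ * (N * Q) := mul_assoc _ _ _
    _ = 0 := by rw [hNQ, mul_zero]

theorem stmt_19 (d : ℕ) (ψ : Matrix (Fin d) (Fin d) ℂ →ₗ[ℂ] Matrix (Fin d) (Fin d) ℂ)
    (hpos : ∀ X : Matrix (Fin d) (Fin d) ℂ, X.PosSemidef → (ψ X).PosSemidef)
    (htp : ∀ X, (ψ X).trace = X.trace)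
    (X : Matrix (Fin d) (Fin d) ℂ) (hX : X.IsHermitian) (hfix : ψ X = X)
    (A B : Matrix (Fin d) (Fin d) ℂ) (hA : A.PosSemidef) (hB : B.PosSemidef)
    (hAB : A * B = 0) (hdec : X = A - B) :
    ψ A = A ∧ ψ B = B ∧ ψ (A + B) = A + B := by
  have hsa : IsSelfAdjoint A := hA.1
  have hcont : ∀ (h : ℝ → ℝ), ContinuousOn h (spectrum ℝ A) := fun h => by
    rw [continuousOn_iff_continuous_restrict]; fun_prop
  set f : ℝ → ℝ := fun x => if x = 0 then 0 else 1 with hf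
  set g : ℝ → ℝ := fun x => if x = 0 then 0 else x⁻¹ with hg
  set P : Matrix (Fin d) (Fin d) ℂ := cfc f A with hPdef
  have key : ∀ (u v : ℝ → ℝ), cfc u A * cfc v A = cfc (fun x => u x * v x) A :=
    fun u v => (cfc_mul u v A (hcont u) (hcont v)).symm
  have hidA : cfc (id : ℝ → ℝ) A = A := cfc_id ℝ A hsa
  have hPsa : IsSelfAdjoint P := cfc_predicate f A
  have hPH : Pᴴ = P := hPsa
  have hPP : P * P = P := by
    rw [hPdef, key]
    exact cfc_congr fun x _ => by by_cases h : x = 0 <;> simp [hf, h]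
  have hPA : P * A = A := by
    calc P * A = cfc f A * cfc id A := by rw [hidA]
      _ = cfc (fun x => f x * id x) A := key f id
      _ = cfc id A := cfc_congr fun x _ => by by_cases h : x = 0 <;> simp [hf, h]
      _ = A := hidA
  have hAP : A * P = A := by
    have := congrArg conjTranspose hPA
    rwa [Matrix.conjTranspose_mul, hPH, hA.1.eq] at this
  have hPB : P * B = 0 := by
    have hPgA : P = cfc g A * A := by
      calc P = cfc (fun x => g x * id x) A := by
              refine cfc_congr fun x _ => ?_
              by_cases h : x = 0 <;> simp [hf, hg, h, inv_mul_cancel₀]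
        _ = cfc g A * cfc id A := (key g id).symm
        _ = cfc g A * A := by rw [hidA]
    rw [hPgA, mul_assoc, hAB, mul_zero]
  have hBP : B * P = 0 := by
    have := congrArg conjTranspose hPB
    rwa [Matrix.conjTranspose_mul, hPH, hB.1.eq, Matrix.conjTranspose_zero] at this
  set A' := ψ A with hA'def
  set B' := ψ B with hB'def
  have hA' : A'.PosSemidef := hpos A hA
  have hB' : B'.PosSemidef := hpos B hB
  have hdiff : A' - B' = A - B := by
    rw [hA'def, hB'def, ← map_sub, ← hdec, hfix, hdec]
  have hPAP : P * A * P = A := by rw [hPA, hAP]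
  have hPBP : P * B * P = 0 := by rw [hPB, zero_mul]
  have hQH : (1 - P)ᴴ = 1 - P := by
    rw [Matrix.conjTranspose_sub, hPH, Matrix.conjTranspose_one]
  have hA'eq : A' = A - B + B' := eq_add_of_sub_eq hdiff
  have htrPA'P : (P * A' * P).trace = A.trace + (P * B' * P).trace := by
    rw [hA'eq]
    have h4 : P * (A - B + B') * P = P * A * P - P * B * P + P * B' * P := by noncomm_ring
    rw [h4, hPAP, hPBP, Matrix.trace_add, Matrix.trace_sub, Matrix.trace_zero]
    ring
  have hsplit : (P * A' * P).trace + ((1 - P) * A' * (1 - P)).trace = A'.trace := by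
    have h2 : (P * A' * P).trace = (P * A').trace := by
      rw [Matrix.trace_mul_comm, ← mul_assoc, hPP]
    have h3 : ((1 - P) * A' * (1 - P)).trace
        = A'.trace - (P * A').trace - (A' * P).trace + (P * A' * P).trace := by
      have h5 : (1 - P) * A' * (1 - P) = A' - P * A' - A' * P + P * A' * P := by noncomm_ring
      rw [h5, Matrix.trace_add, Matrix.trace_sub, Matrix.trace_sub]
    rw [h3, h2, Matrix.trace_mul_comm A' P]
    ring
  have hPB'P_psd : (P * B' * P).PosSemidef := by
    have := hB'.conjTranspose_mul_mul_same P
    rwa [hPH] at this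
  have hQA'Q_psd : ((1 - P) * A' * (1 - P)).PosSemidef := by
    have := hA'.conjTranspose_mul_mul_same (1 - P)
    rwa [hQH] at this
  have hsum0 : (P * B' * P).trace + ((1 - P) * A' * (1 - P)).trace = 0 := by
    have hApre : A'.trace = A.trace := htp A
    have h6 := hsplit
    rw [htrPA'P, hApre] at h6
    linear_combination h6
  have hzeros := (add_eq_zero_iff_of_nonneg (psd_trace_nonneg' hPB'P_psd)
    (psd_trace_nonneg' hQA'Q_psd)).mp hsum0
  have hPB'P : P * B' * P = 0 := psd_trace_zero' hPB'P_psd hzeros.1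
  have hQA'Q : (1 - P) * A' * (1 - P) = 0 := psd_trace_zero' hQA'Q_psd hzeros.2
  have hB'P : B' * P = 0 := psd_conj_zero' hB' hPH hPB'P
  have hA'Q : A' * (1 - P) = 0 := psd_conj_zero' hA' hQH hQA'Q
  have hA'P : A' * P = A' := by
    have h7 : A' - A' * P = 0 := by
      have := hA'Q; rwa [mul_sub, mul_one] at this
    rw [sub_eq_zero] at h7; exact h7.symm
  have hPA' : P * A' = A' := by
    have := congrArg conjTranspose hA'P
    rwa [Matrix.conjTranspose_mul, hPH, hA'.1.eq] at this
  have hmain : P * (A' - B') * P = P * (A - B) * P := by rw [hdiff]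
  have hA'A : A' = A := by
    have l : P * (A' - B') * P = A' := by
      have h8 : P * (A' - B') * P = P * A' * P - P * B' * P := by noncomm_ring
      rw [h8, hPB'P, sub_zero, mul_assoc, hA'P, hPA']
    have r : P * (A - B) * P = A := by
      have h9 : P * (A - B) * P = P * A * P - P * B * P := by noncomm_ring
      rw [h9, hPAP, hPBP, sub_zero]
    rw [l, r] at hmain; exact hmain
  have hB'B : B' = B := by
    have h := hdiff; rw [hA'A] at h
    calc B' = A - (A - B') := by abel
      _ = A - (A - B) := by rw [h]
      _ = B := by abel
  refine ⟨hA'A, hB'B, ?_⟩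
  rw [map_add, ← hA'def, ← hB'def, hA'A, hB'B]
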